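/- Suppose the constant step size satisfies α ≤ 2/L. Then for every epoch k and every 0 ≤ i ≤ n−1, |E[F(x_i^k)] − E[f(x_i^k; σ_k(i+1))]| ≤ 2αG². -/

import Mathlib

open Finset MeasureTheory ProbabilityTheory RealInnerProductSpace

noncomputable section

abbrev Vec (d : ℕ) : Type := EuclideanSpace ℝ (Fin d)

/-- The objective `F(x) = (1/n) ∑ i, f(x; i)`. -/
def avgF {d n : ℕ} (f : Fin n → Vec d → ℝ) : Vec d → ℝ :=
  fun x => (∑ i, f i x) / n

/-- SGDo iterates with constant step size `α`, flattened over epochs: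
`σ j` is the permutation used during epoch `j + 1`, and at total step `t`
(the `t % n`-th step of epoch `t / n + 1`) we take a gradient step on the
component selected by the permutation of the current epoch. -/
def sgdoSeq {d n : ℕ} (hn : 0 < n) (f : Fin n → Vec d → ℝ) (α : ℝ)
    (x0 : Vec d) (σ : ℕ → Equiv.Perm (Fin n)) : ℕ → Vec d
  | 0 => x0
  | t + 1 =>
      sgdoSeq hn f α x0 σ t
        - α • gradient (f (σ (t / n) ⟨t % n, Nat.mod_lt t hn⟩)) (sgdoSeq hn f α x0 σ t)

/-- `x_i^k`, for epoch `k ≥ 1` and within-epoch index `0 ≤ i ≤ n`. -/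
def sgdoIter {d n : ℕ} (hn : 0 < n) (f : Fin n → Vec d → ℝ) (α : ℝ)
    (x0 : Vec d) (σ : ℕ → Equiv.Perm (Fin n)) (k i : ℕ) : Vec d :=
  sgdoSeq hn f α x0 σ ((k - 1) * n + i)

/-- Extend a `K`-tuple of permutations to `ℕ` (junk value beyond `K`). -/
def extendPerm {n K : ℕ} (ω : Fin K → Equiv.Perm (Fin n)) : ℕ → Equiv.Perm (Fin n) :=
  fun j => if h : j < K then ω ⟨j, h⟩ else 1

/-- Expectation of `g` under the uniform distribution on a finite type. -/
def unifExp {Ω : Type*} [Fintype Ω] (g : Ω → ℝ) : ℝ :=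
  (∑ ω, g ω) / (Fintype.card Ω)

instance permMeasurableSpace {n : ℕ} : MeasurableSpace (Equiv.Perm (Fin n)) := ⊤

/-- The uniform probability measure on a finite type. -/
def unifMeasure (Ω : Type*) [MeasurableSpace Ω] [Fintype Ω] [Nonempty Ω] : Measure Ω :=
  (PMF.uniformOfFintype Ω).toMeasure

/-- Wasserstein-1 distance between measures on `ℝ^d`, as an infimum over couplings. -/
def W1dist {d : ℕ} (P Q : Measure (Vec d)) : ℝ :=
  sInf { c | ∃ μ : Measure (Vec d × Vec d), IsProbabilityMeasure μ ∧
    μ.map Prod.fst = P ∧ μ.map Prod.snd = Q ∧ c = ∫ p, ‖p.1 - p.2‖ ∂μ }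

/-- Wasserstein-2 distance between measures on `ℝ^d`, as an infimum over couplings. -/
def W2dist {d : ℕ} (P Q : Measure (Vec d)) : ℝ :=
  sInf { c | ∃ μ : Measure (Vec d × Vec d), IsProbabilityMeasure μ ∧
    μ.map Prod.fst = P ∧ μ.map Prod.snd = Q ∧ c = Real.sqrt (∫ p, ‖p.1 - p.2‖ ^ 2 ∂μ) }

section Helpers

variable {d : ℕ}

lemma hasDerivAt_line (f : Vec d → ℝ) (hf : Differentiable ℝ f) (x v : Vec d) (t : ℝ) :
    HasDerivAt (fun s : ℝ => f (x + s • v)) ⟪gradient f (x + t • v), v⟫ t := by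
  have h1 : HasDerivAt (fun s : ℝ => x + s • v) v t := by
    simpa using ((hasDerivAt_id t).smul_const v).const_add x
  have h2 := ((hf (x + t • v)).hasGradientAt.hasFDerivAt).comp_hasDerivAt t h1
  simpa [InnerProductSpace.toDual_apply_apply, Function.comp_def] using h2

lemma convexOn_line (f : Vec d → ℝ) (hconv : ConvexOn ℝ Set.univ f) (x v : Vec d) :
    ConvexOn ℝ Set.univ (fun t : ℝ => f (x + t • v)) := by
  have h := hconv.comp_affineMap (AffineMap.lineMap x (x + v) : ℝ →ᵃ[ℝ] Vec d)
  have : (f ∘ (AffineMap.lineMap x (x + v) : ℝ →ᵃ[ℝ] Vec d)) = fun t : ℝ => f (x + t • v) := by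
    funext t
    simp [AffineMap.lineMap_apply, add_comm]
  rw [this] at h
  simpa using h

lemma grad_ineq (f : Vec d → ℝ) (hf : Differentiable ℝ f) (hconv : ConvexOn ℝ Set.univ f)
    (x y : Vec d) : f x + ⟪gradient f x, y - x⟫ ≤ f y := by
  set v := y - x with hv
  have hg : ∀ t : ℝ, HasDerivAt (fun s : ℝ => f (x + s • v)) ⟪gradient f (x + t • v), v⟫ t :=
    hasDerivAt_line f hf x v
  have hgc : ConvexOn ℝ Set.univ (fun t : ℝ => f (x + t • v)) := convexOn_line f hconv x v
  have hd0 : deriv (fun s : ℝ => f (x + s • v)) 0 = ⟪gradient f x, v⟫ := by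
    simpa using (hg 0).deriv
  have hle := hgc.deriv_le_slope (Set.mem_univ (0:ℝ)) (Set.mem_univ (1:ℝ)) one_pos
    ((hg 0).differentiableAt)
  rw [hd0] at hle
  have h1 : (fun s : ℝ => f (x + s • v)) 1 = f y := by simp [hv]
  have h0 : (fun s : ℝ => f (x + s • v)) 0 = f x := by simp
  rw [slope_def_field] at hle
  simp only [h1, h0] at hle
  linarith [hle]


lemma descent (f : Vec d → ℝ) (hf : Differentiable ℝ f) (L : ℝ) (hL : 0 ≤ L)
    (hsm : ∀ a b : Vec d, ‖gradient f a - gradient f b‖ ≤ L * ‖a - b‖) (x y : Vec d) :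
    f y ≤ f x + ⟪gradient f x, y - x⟫ + L / 2 * ‖y - x‖ ^ 2 := by
  set v := y - x with hv
  set c : ℝ := ⟪gradient f x, v⟫ with hc
  set ψ : ℝ → ℝ := fun t => f x + t * c + (L / 2 * ‖v‖ ^ 2) * t ^ 2 - f (x + t • v) with hψ
  have hψd : ∀ t : ℝ, HasDerivAt ψ
      (c + (L * ‖v‖ ^ 2) * t - ⟪gradient f (x + t • v), v⟫) t := by
    intro t
    have h1 : HasDerivAt (fun t : ℝ => f x + t * c + (L / 2 * ‖v‖ ^ 2) * t ^ 2)
        (c + (L * ‖v‖ ^ 2) * t) t := by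
      have ha : HasDerivAt (fun t : ℝ => t * c) c t := by
        simpa using (hasDerivAt_id t).mul_const c
      have hb : HasDerivAt (fun t : ℝ => (L / 2 * ‖v‖ ^ 2) * t ^ 2)
          ((L / 2 * ‖v‖ ^ 2) * (2 * t)) t := by
        simpa using (hasDerivAt_pow 2 t).const_mul (L / 2 * ‖v‖ ^ 2)
      have := (ha.const_add (f x)).add hb
      rw [show c + L * ‖v‖ ^ 2 * t = c + L / 2 * ‖v‖ ^ 2 * (2 * t) by ring]
      exact this
    exact h1.sub (hasDerivAt_line f hf x v t)
  have hmono : MonotoneOn ψ (Set.Icc (0:ℝ) 1) := by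
    apply monotoneOn_of_deriv_nonneg (convex_Icc 0 1)
    · exact Continuous.continuousOn (by
        have : Differentiable ℝ ψ := fun t => (hψd t).differentiableAt
        exact this.continuous)
    · intro t _; exact ((hψd t).differentiableAt).differentiableWithinAt
    · intro t ht
      rw [interior_Icc] at ht
      rw [(hψd t).deriv]
      have hb : ‖gradient f (x + t • v) - gradient f x‖ ≤ L * (t * ‖v‖) := by
        have := hsm (x + t • v) x
        simpa [norm_smul, abs_of_pos ht.1] using this
      have hinner : ⟪gradient f (x + t • v), v⟫ - c ≤ L * (t * ‖v‖) * ‖v‖ := by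
        have h1 : ⟪gradient f (x + t • v) - gradient f x, v⟫ ≤
            ‖gradient f (x + t • v) - gradient f x‖ * ‖v‖ := real_inner_le_norm _ _
        have h2 : ⟪gradient f (x + t • v) - gradient f x, v⟫ =
            ⟪gradient f (x + t • v), v⟫ - c := by rw [inner_sub_left]
        nlinarith [norm_nonneg v]
      nlinarith
  have h01 := hmono (Set.mem_Icc.mpr ⟨le_refl 0, zero_le_one⟩)
    (Set.mem_Icc.mpr ⟨zero_le_one, le_refl 1⟩) zero_le_one
  have hψ0 : ψ 0 = 0 := by simp [hψ]
  have hψ1 : ψ 1 = f x + c + L / 2 * ‖v‖ ^ 2 - f y := by simp [hψ, hv]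
  rw [hψ0, hψ1] at h01
  linarith

lemma star_ineq (f : Vec d → ℝ) (hf : Differentiable ℝ f) (hconv : ConvexOn ℝ Set.univ f)
    (L : ℝ) (hL : 0 < L)
    (hsm : ∀ a b : Vec d, ‖gradient f a - gradient f b‖ ≤ L * ‖a - b‖) (x y : Vec d) :
    f x + ⟪gradient f x, y - x⟫ + 1 / (2 * L) * ‖gradient f y - gradient f x‖ ^ 2 ≤ f y := by
  set u := gradient f y - gradient f x with hu
  set w := y - (1 / L) • u with hw
  have h1 := descent f hf L hL.le hsm y w
  have h2 := grad_ineq f hf hconv x w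
  have e1 : w - y = -((1 / L) • u) := by rw [hw]; abel
  have e2 : ⟪gradient f y, w - y⟫ = -(1 / L * ⟪gradient f y, u⟫) := by
    rw [e1, inner_neg_right, real_inner_smul_right]
  have e3 : ‖w - y‖ ^ 2 = (1 / L) ^ 2 * ‖u‖ ^ 2 := by
    rw [e1, norm_neg, norm_smul, Real.norm_eq_abs]
    rw [abs_of_pos (show (0:ℝ) < 1 / L by positivity)]
    ring
  have e4 : ⟪gradient f x, w - x⟫ = ⟪gradient f x, y - x⟫ - 1 / L * ⟪gradient f x, u⟫ := by
    rw [hw, sub_right_comm, inner_sub_right, real_inner_smul_right]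
  have e5 : ⟪gradient f y, u⟫ - ⟪gradient f x, u⟫ = ‖u‖ ^ 2 := by
    rw [← inner_sub_left, ← hu, real_inner_self_eq_norm_sq]
  have e6 : L / 2 * ((1 / L) ^ 2 * ‖u‖ ^ 2) = 1 / (2 * L) * ‖u‖ ^ 2 := by
    field_simp
  rw [e2, e3] at h1
  rw [e4] at h2
  have e7 : 1 / L * ‖u‖ ^ 2 - 1 / (2 * L) * ‖u‖ ^ 2 = 1 / (2 * L) * ‖u‖ ^ 2 := by
    field_simp
    ring
  have e8 : 1 / L * ⟪gradient f y, u⟫ - 1 / L * ⟪gradient f x, u⟫ = 1 / L * ‖u‖ ^ 2 := by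
    rw [← mul_sub, e5]
  linarith [h1, h2, e6, e7, e8]

lemma cocoercive2 (f : Vec d → ℝ) (hf : Differentiable ℝ f) (hconv : ConvexOn ℝ Set.univ f)
    (L : ℝ) (hL : 0 < L)
    (hsm : ∀ a b : Vec d, ‖gradient f a - gradient f b‖ ≤ L * ‖a - b‖) (x y : Vec d) :
    (1 / L) * ‖gradient f x - gradient f y‖ ^ 2 ≤ ⟪gradient f x - gradient f y, x - y⟫ := by
  have h1 := star_ineq f hf hconv L hL hsm x y
  have h2 := star_ineq f hf hconv L hL hsm y x
  have e0 : ‖gradient f x - gradient f y‖ = ‖gradient f y - gradient f x‖ := by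
    rw [norm_sub_rev]
  have e1 : ⟪gradient f x - gradient f y, x - y⟫ =
      ⟪gradient f x, x - y⟫ - ⟪gradient f y, x - y⟫ := inner_sub_left _ _ _
  have e2 : ⟪gradient f x, y - x⟫ = -⟪gradient f x, x - y⟫ := by
    rw [show y - x = -(x - y) by abel, inner_neg_right]
  have e3 : ⟪gradient f y, x - y⟫ = ⟪gradient f y, x - y⟫ := rfl
  have e4 : 1 / (2 * L) * ‖gradient f y - gradient f x‖ ^ 2
      + 1 / (2 * L) * ‖gradient f x - gradient f y‖ ^ 2
      = 1 / L * ‖gradient f x - gradient f y‖ ^ 2 := by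
    rw [← e0]; field_simp; ring
  linarith

lemma nonexpansive_step (f : Vec d → ℝ) (hf : Differentiable ℝ f)
    (hconv : ConvexOn ℝ Set.univ f) (L α : ℝ) (hL : 0 < L) (hα : 0 < α) (hα2 : α ≤ 2 / L)
    (hsm : ∀ a b : Vec d, ‖gradient f a - gradient f b‖ ≤ L * ‖a - b‖) (x y : Vec d) :
    ‖(x - α • gradient f x) - (y - α • gradient f y)‖ ≤ ‖x - y‖ := by
  set u := gradient f x - gradient f y with hu
  have key : (x - α • gradient f x) - (y - α • gradient f y) = (x - y) - α • u := by
    rw [hu]; rw [smul_sub]; abel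
  have hco := cocoercive2 f hf hconv L hL hsm x y
  have hexp : ‖(x - y) - α • u‖ ^ 2 = ‖x - y‖ ^ 2 - 2 * (α * ⟪x - y, u⟫) + α ^ 2 * ‖u‖ ^ 2 := by
    rw [norm_sub_sq_real, real_inner_smul_right, norm_smul]
    simp [Real.norm_eq_abs, abs_of_pos hα]
    ring
  have hcomm : ⟪x - y, u⟫ = ⟪u, x - y⟫ := real_inner_comm _ _
  have hαL : α * L ≤ 2 := (le_div_iff₀ hL).mp hα2
  have hsq : ‖(x - y) - α • u‖ ^ 2 ≤ ‖x - y‖ ^ 2 := by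
    have h1 : (1 / L) * ‖u‖ ^ 2 ≤ ⟪u, x - y⟫ := hco
    have h2 : α ^ 2 * ‖u‖ ^ 2 ≤ 2 * α * ((1/L) * ‖u‖ ^ 2) := by
      have h3 : α * α * L ≤ 2 * α := by nlinarith
      have h4 : α ^ 2 * ‖u‖ ^ 2 * L ≤ 2 * α * ‖u‖ ^ 2 := by
        nlinarith [mul_le_mul_of_nonneg_right h3 (sq_nonneg ‖u‖)]
      rw [show 2 * α * ((1/L) * ‖u‖ ^ 2) = (2 * α * ‖u‖ ^ 2) / L by ring]
      exact (le_div_iff₀ hL).mpr h4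
    nlinarith
  rw [key]
  nlinarith [norm_nonneg (x - y - α • u), norm_nonneg (x - y), hsq]


lemma lip_of_grad (f : Vec d → ℝ) (hf : Differentiable ℝ f) (G : ℝ)
    (hG : ∀ x, ‖gradient f x‖ ≤ G) (x y : Vec d) : |f x - f y| ≤ G * ‖x - y‖ := by
  have hb : ∀ z : Vec d, z ∈ (Set.univ : Set (Vec d)) → ‖fderiv ℝ f z‖ ≤ G := by
    intro z _
    have : fderiv ℝ f z = InnerProductSpace.toDual ℝ (Vec d) (gradient f z) := by
      simp [gradient]
    rw [this, (InnerProductSpace.toDual ℝ (Vec d)).norm_map]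
    exact hG z
  have := convex_univ.norm_image_sub_le_of_norm_fderiv_le (fun z _ => (hf z)) hb
    (Set.mem_univ y) (Set.mem_univ x)
  simpa [Real.norm_eq_abs, norm_sub_rev x y] using this


end Helpers

section Traj
variable {d n : ℕ} (hn : 0 < n) (f : Fin n → Vec d → ℝ) (α : ℝ) (x0 : Vec d)

lemma seq_congr (σ τ : ℕ → Equiv.Perm (Fin n)) (T : ℕ)
    (h : ∀ t, t < T → σ (t / n) ⟨t % n, Nat.mod_lt t hn⟩ = τ (t / n) ⟨t % n, Nat.mod_lt t hn⟩) :
    sgdoSeq hn f α x0 σ T = sgdoSeq hn f α x0 τ T := by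
  induction T with
  | zero => rfl
  | succ T ih =>
    have hT := ih (fun t ht => h t (ht.trans (Nat.lt_succ_self T)))
    simp only [sgdoSeq, hT, h T (Nat.lt_succ_self T)]

lemma step_crude (G : ℝ) (hG : ∀ j x, ‖gradient (f j) x‖ ≤ G)
    (hα : 0 < α) (σ τ : ℕ → Equiv.Perm (Fin n)) (t : ℕ)
    (heq : sgdoSeq hn f α x0 σ t = sgdoSeq hn f α x0 τ t) :
    ‖sgdoSeq hn f α x0 σ (t+1) - sgdoSeq hn f α x0 τ (t+1)‖ ≤ 2 * α * G := by
  simp only [sgdoSeq, heq]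
  set a := sgdoSeq hn f α x0 τ t
  set g1 := gradient (f (σ (t / n) ⟨t % n, Nat.mod_lt t hn⟩)) a
  set g2 := gradient (f (τ (t / n) ⟨t % n, Nat.mod_lt t hn⟩)) a
  have : a - α • g1 - (a - α • g2) = α • g2 - α • g1 := by abel
  rw [this]
  calc ‖α • g2 - α • g1‖ ≤ ‖α • g2‖ + ‖α • g1‖ := norm_sub_le _ _
    _ ≤ α * G + α * G := by
        gcongr <;> rw [norm_smul, Real.norm_eq_abs, abs_of_pos hα] <;>
          exact mul_le_mul_of_nonneg_left (by first | exact hG _ _) hα.le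
    _ = 2 * α * G := by ring

lemma traj_close (G L : ℝ) (hG : ∀ j x, ‖gradient (f j) x‖ ≤ G)
    (hdiff : ∀ j, Differentiable ℝ (f j)) (hconv : ∀ j, ConvexOn ℝ Set.univ (f j))
    (hL : 0 < L) (hα : 0 < α) (hα2 : α ≤ 2 / L)
    (hsm : ∀ j (a b : Vec d), ‖gradient (f j) a - gradient (f j) b‖ ≤ L * ‖a - b‖)
    (σ τ : ℕ → Equiv.Perm (Fin n)) (t0 : ℕ)
    (heq : sgdoSeq hn f α x0 σ t0 = sgdoSeq hn f α x0 τ t0) :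
    ∀ T, t0 < T →
      (∀ t, t0 < t → t < T →
        σ (t / n) ⟨t % n, Nat.mod_lt t hn⟩ = τ (t / n) ⟨t % n, Nat.mod_lt t hn⟩) →
      ‖sgdoSeq hn f α x0 σ T - sgdoSeq hn f α x0 τ T‖ ≤ 2 * α * G := by
  intro T
  induction T with
  | zero => omega
  | succ T ih =>
    intro hT hcomp
    rcases Nat.lt_succ_iff_lt_or_eq.mp hT with hlt | hEq
    · have hbound := ih hlt (fun t h1 h2 => hcomp t h1 (h2.trans (Nat.lt_succ_self T)))
      have hc := hcomp T hlt (Nat.lt_succ_self T)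
      simp only [sgdoSeq, hc]
      set j := τ (T / n) ⟨T % n, Nat.mod_lt T hn⟩
      set a := sgdoSeq hn f α x0 σ T
      set b := sgdoSeq hn f α x0 τ T
      calc ‖a - α • gradient (f j) a - (b - α • gradient (f j) b)‖ ≤ ‖a - b‖ :=
            nonexpansive_step (f j) (hdiff j) (hconv j) L α hL hα hα2 (hsm j) a b
        _ ≤ 2 * α * G := hbound
    · subst hEq
      exact step_crude hn f α x0 G hG hα σ τ t0 heq

end Traj


/-- If `α ≤ 2/L`, then for every epoch `k` and `0 ≤ i ≤ n−1`,
`|E[F(x_i^k)] − E[f(x_i^k; σ_k(i+1))]| ≤ 2αG²`. -/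
theorem bias_bound
    (d n K : ℕ) (hn : 0 < n) (hK : 0 < K)
    (f : Fin n → Vec d → ℝ) (G L α : ℝ) (x0 : Vec d)
    (hα : 0 < α) (hα2 : α ≤ 2 / L)
    (hdiff : ∀ i, Differentiable ℝ (f i))
    (hconv : ∀ i, ConvexOn ℝ Set.univ (f i))
    (hGlip : ∀ i x, ‖gradient (f i) x‖ ≤ G)
    (hLsmooth : ∀ i x y, ‖gradient (f i) x - gradient (f i) y‖ ≤ L * ‖x - y‖)
    (k : ℕ) (hk1 : 1 ≤ k) (hkK : k ≤ K) (i : Fin n) :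
    |unifExp (fun ω : Fin K → Equiv.Perm (Fin n) =>
        avgF f (sgdoIter hn f α x0 (extendPerm ω) k (i : ℕ)))
      - unifExp (fun ω : Fin K → Equiv.Perm (Fin n) =>
        f (extendPerm ω (k - 1) i) (sgdoIter hn f α x0 (extendPerm ω) k (i : ℕ)))|
    ≤ 2 * α * G ^ 2 := by
  have hL : 0 < L := by
    by_contra h
    push_neg at h
    have h2 : 2 / L ≤ 0 := div_nonpos_of_nonneg_of_nonpos (by norm_num) h
    linarith
  have hG0 : 0 ≤ G := le_trans (norm_nonneg _) (hGlip i x0)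
  have hk : k - 1 < K := by omega
  set kk : Fin K := ⟨k - 1, hk⟩ with hkk
  set m : ℕ := (k - 1) * n with hm
  set X : (Fin K → Equiv.Perm (Fin n)) → Vec d :=
    fun ω => sgdoSeq hn f α x0 (extendPerm ω) (m + (i : ℕ)) with hX
  -- the swapping involution
  set Φ : Fin n → (Fin K → Equiv.Perm (Fin n)) → (Fin K → Equiv.Perm (Fin n)) :=
    fun p ω => Function.update ω kk (ω kk * Equiv.swap p i) with hΦ
  have hΦinv : ∀ p, Function.Involutive (Φ p) := by
    intro p ω
    funext j
    by_cases hj : j = kk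
    · subst hj
      simp [hΦ, mul_assoc]
    · simp [hΦ, Function.update_of_ne hj]
  -- extendPerm facts
  have hE1 : ∀ (p : Fin n) ω (j : ℕ), j ≠ k - 1 → extendPerm (Φ p ω) j = extendPerm ω j := by
    intro p ω j hj
    unfold extendPerm
    by_cases hjK : j < K
    · rw [dif_pos hjK, dif_pos hjK, hΦ]
      exact Function.update_of_ne (by simp [hkk, Fin.ext_iff, hj]) _ _
    · rw [dif_neg hjK, dif_neg hjK]
  have hE2 : ∀ (p : Fin n) ω, extendPerm (Φ p ω) (k - 1) = ω kk * Equiv.swap p i := by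
    intro p ω
    unfold extendPerm
    rw [dif_pos hk, hΦ]
    exact Function.update_self _ _ _
  have hE3 : ∀ (ω : Fin K → Equiv.Perm (Fin n)), extendPerm ω (k - 1) = ω kk := by
    intro ω
    unfold extendPerm
    rw [dif_pos hk]
  -- component equality
  have hcompeq : ∀ (p : Fin n) ω (t : ℕ), t < m + (i : ℕ) → t ≠ m + (p : ℕ) →
      extendPerm (Φ p ω) (t / n) ⟨t % n, Nat.mod_lt t hn⟩
        = extendPerm ω (t / n) ⟨t % n, Nat.mod_lt t hn⟩ := by
    intro p ω t ht htp
    by_cases htm : t < m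
    · have hdivlt : t / n < k - 1 := by
        rw [Nat.div_lt_iff_lt_mul hn]
        omega
      rw [hE1 p ω (t / n) (by omega)]
    · push_neg at htm
      set r : ℕ := t - m with hr
      have htr : t = (k - 1) * n + r := by omega
      have hrn : r < n := by omega
      have hdiv : t / n = k - 1 := by
        rw [htr, mul_comm, Nat.mul_add_div hn, Nat.div_eq_of_lt hrn]
        omega
      have hmod : t % n = r := by
        rw [htr, mul_comm, Nat.mul_add_mod, Nat.mod_eq_of_lt hrn]
      have hri : r < (i : ℕ) := by omega
      have hrp : r ≠ (p : ℕ) := by omega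
      rw [hdiv]
      rw [hE2 p ω, hE3 ω]
      have hswap : Equiv.swap p i ⟨t % n, Nat.mod_lt t hn⟩ = ⟨t % n, Nat.mod_lt t hn⟩ := by
        apply Equiv.swap_apply_of_ne_of_ne
        · exact Fin.ne_of_val_ne (show t % n ≠ (p : ℕ) by omega)
        · exact Fin.ne_of_val_ne (show t % n ≠ (i : ℕ) by omega)
      rw [Equiv.Perm.mul_apply, hswap]
  -- distance bound
  have hdist : ∀ (p : Fin n) ω, ‖X (Φ p ω) - X ω‖ ≤ 2 * α * G := by
    intro p ω
    by_cases hpi : (p : ℕ) < (i : ℕ)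
    · have heq : sgdoSeq hn f α x0 (extendPerm (Φ p ω)) (m + (p : ℕ))
          = sgdoSeq hn f α x0 (extendPerm ω) (m + (p : ℕ)) :=
        seq_congr hn f α x0 _ _ _ (fun t ht => hcompeq p ω t (by omega) (by omega))
      exact traj_close hn f α x0 G L hGlip hdiff hconv hL hα hα2 hLsmooth _ _
        (m + (p : ℕ)) heq (m + (i : ℕ)) (by omega)
        (fun t h1 h2 => hcompeq p ω t h2 (by omega))
    · have heq : X (Φ p ω) = X ω :=
        seq_congr hn f α x0 _ _ _ (fun t ht => hcompeq p ω t ht (by omega))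
      rw [heq, sub_self, norm_zero]
      positivity
  -- value bound
  have hval : ∀ (p : Fin n) ω,
      |f (ω kk p) (X ω) - f (ω kk p) (X (Φ p ω))| ≤ 2 * α * G ^ 2 := by
    intro p ω
    calc |f (ω kk p) (X ω) - f (ω kk p) (X (Φ p ω))|
        ≤ G * ‖X ω - X (Φ p ω)‖ :=
          lip_of_grad (f (ω kk p)) (hdiff _) G (hGlip _) _ _
      _ ≤ G * (2 * α * G) := by
          gcongr
          rw [norm_sub_rev]
          exact hdist p ω
      _ = 2 * α * G ^ 2 := by ring
  -- sums
  set Nc : ℝ := (Fintype.card (Fin K → Equiv.Perm (Fin n)) : ℝ) with hNc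
  have hNpos : 0 < Nc := by
    rw [hNc]
    exact_mod_cast Fintype.card_pos
  set B : ℝ := ∑ ω : Fin K → Equiv.Perm (Fin n), f (ω kk i) (X ω) with hB
  set S : Fin n → ℝ := fun p => ∑ ω : Fin K → Equiv.Perm (Fin n), f (ω kk p) (X ω) with hS
  have claim1 : ∀ p : Fin n, |S p - B| ≤ Nc * (2 * α * G ^ 2) := by
    intro p
    have hB' : B = ∑ ω : Fin K → Equiv.Perm (Fin n), f ((Φ p ω) kk i) (X (Φ p ω)) :=
      (Fintype.sum_bijective (Φ p) (hΦinv p).bijective _ _ (fun ω => rfl)).symm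
    have hσ : ∀ ω : Fin K → Equiv.Perm (Fin n), (Φ p ω) kk i = ω kk p := by
      intro ω
      simp [hΦ, Equiv.Perm.mul_apply, Equiv.swap_apply_right]
    rw [hB']
    simp only [hσ]
    rw [hS, ← Finset.sum_sub_distrib]
    calc |∑ ω : Fin K → Equiv.Perm (Fin n), (f (ω kk p) (X ω) - f (ω kk p) (X (Φ p ω)))|
        ≤ ∑ ω : Fin K → Equiv.Perm (Fin n), |f (ω kk p) (X ω) - f (ω kk p) (X (Φ p ω))| :=
          Finset.abs_sum_le_sum_abs _ _
      _ ≤ ∑ _ω : Fin K → Equiv.Perm (Fin n), (2 * α * G ^ 2) :=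
          Finset.sum_le_sum (fun ω _ => hval p ω)
      _ = Nc * (2 * α * G ^ 2) := by
          rw [Finset.sum_const, hNc]
          simp [mul_comm]
  set A : ℝ := ∑ ω : Fin K → Equiv.Perm (Fin n), avgF f (X ω) with hA
  have claim2 : A = (∑ p : Fin n, S p) / n := by
    have inner_eq : ∀ ω : Fin K → Equiv.Perm (Fin n),
        (∑ j : Fin n, f j (X ω)) = ∑ p : Fin n, f (ω kk p) (X ω) :=
      fun ω => (Equiv.sum_comp (ω kk) (fun j => f j (X ω))).symm
    rw [hA]
    unfold avgF
    rw [← Finset.sum_div]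
    congr 1
    simp only [inner_eq]
    rw [Finset.sum_comm]
  have hn' : (0:ℝ) < (n : ℝ) := by exact_mod_cast hn
  have hAB : |A - B| ≤ Nc * (2 * α * G ^ 2) := by
    have h1 : A - B = (∑ p : Fin n, (S p - B)) / n := by
      rw [claim2, Finset.sum_sub_distrib, Finset.sum_const, Finset.card_univ,
        Fintype.card_fin, sub_div, nsmul_eq_mul]
      congr 1
      exact (mul_div_cancel_left₀ B (ne_of_gt hn')).symm
    rw [h1, abs_div, abs_of_pos hn', div_le_iff₀ hn']
    calc |∑ p : Fin n, (S p - B)| ≤ ∑ p : Fin n, |S p - B| := Finset.abs_sum_le_sum_abs _ _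
      _ ≤ ∑ _p : Fin n, Nc * (2 * α * G ^ 2) := Finset.sum_le_sum (fun p _ => claim1 p)
      _ = n * (Nc * (2 * α * G ^ 2)) := by
          rw [Finset.sum_const, Finset.card_univ, Fintype.card_fin, nsmul_eq_mul]
      _ = Nc * (2 * α * G ^ 2) * n := by ring
  have hg1 : unifExp (fun ω : Fin K → Equiv.Perm (Fin n) =>
      avgF f (sgdoIter hn f α x0 (extendPerm ω) k (i : ℕ))) = A / Nc := rfl
  have hg2 : unifExp (fun ω : Fin K → Equiv.Perm (Fin n) =>
      f (extendPerm ω (k - 1) i) (sgdoIter hn f α x0 (extendPerm ω) k (i : ℕ))) = B / Nc := by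
    unfold unifExp
    rw [hB]
    congr 1
    apply Finset.sum_congr rfl
    intro ω _
    show f (extendPerm ω (k - 1) i) (sgdoIter hn f α x0 (extendPerm ω) k (i : ℕ))
      = f (ω kk i) (X ω)
    rw [hE3 ω]
    rfl
  rw [hg1, hg2, div_sub_div_same, abs_div, abs_of_pos hNpos, div_le_iff₀ hNpos]
  calc |A - B| ≤ Nc * (2 * α * G ^ 2) := hAB
    _ = 2 * α * G ^ 2 * Nc := by ring
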